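/- arXiv:math/9204232 — 4 statements merged into one kernel-verified Lean document; each statement's English description precedes it below -/
import Mathlib

section
/- Let 𝒳 and 𝒳′ be finite irredundant families of irreducible reduced analytic germs in (ℂⁿ,0) (irredundant meaning that deleting any member of the family strictly enlarges the associated tangent algebra D_𝒳). If D_𝒳 = D_{𝒳′}, then 𝒳 = 𝒳′ as sets of germs. In particular, the germ X associated to a maximal visible subalgebra as in Theorem 1(b),(c) is uniquely determined by the subalgebra. -/
open Filter Topology

set_option synthInstance.maxHeartbeats 1000000
set_option maxHeartbeats 1000000

noncomputable section

/-- The `ℂ`-algebra structure on germs of `ℂ`-valued functions. -/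
instance germAlgebra {α : Type*} (l : Filter α) : Algebra ℂ (Filter.Germ l ℂ) :=
  Algebra.ofModule
    (fun r x y => by
      induction x using Filter.Germ.inductionOn
      induction y using Filter.Germ.inductionOn
      rw [← Filter.Germ.coe_smul, ← Filter.Germ.coe_mul, ← Filter.Germ.coe_mul,
        ← Filter.Germ.coe_smul, smul_mul_assoc])
    (fun r x y => by
      induction x using Filter.Germ.inductionOn
      induction y using Filter.Germ.inductionOn
      rw [← Filter.Germ.coe_smul, ← Filter.Germ.coe_mul, ← Filter.Germ.coe_mul,
        ← Filter.Germ.coe_smul, mul_smul_comm])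

/-- The algebra `O_n` of germs at `0 ∈ ℂⁿ` of holomorphic functions, realized as the
subalgebra of all germs (at the filter `𝓝 0`) of functions `ℂⁿ → ℂ` that are analytic at `0`. -/
def On (n : ℕ) : Subalgebra ℂ (Filter.Germ (𝓝 (0 : Fin n → ℂ)) ℂ) where
  carrier := {g | ∃ f : (Fin n → ℂ) → ℂ, AnalyticAt ℂ f 0 ∧ g = Filter.Germ.ofFun f}
  mul_mem' := by
    rintro a b ⟨f, hf, rfl⟩ ⟨g, hg, rfl⟩
    exact ⟨f * g, hf.mul hg, rfl⟩
  add_mem' := by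
    rintro a b ⟨f, hf, rfl⟩ ⟨g, hg, rfl⟩
    exact ⟨f + g, hf.add hg, rfl⟩
  algebraMap_mem' := fun c => ⟨fun _ => c, analyticAt_const, by
    rw [Algebra.algebraMap_eq_smul_one, ← Filter.Germ.coe_one, ← Filter.Germ.coe_smul]
    congr 1; funext _; simp⟩


/-- Membership in `O_n` means being the germ of a function analytic at `0`. -/
theorem mem_On {n : ℕ} {g : Filter.Germ (𝓝 (0 : Fin n → ℂ)) ℂ} :
    g ∈ On n ↔ ∃ f : (Fin n → ℂ) → ℂ, AnalyticAt ℂ f 0 ∧ g = Filter.Germ.ofFun f :=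
  Iff.rfl

attribute [irreducible] On

/-- The Lie algebra `D = Der_ℂ(O_n)` of germs of holomorphic vector fields at `0 ∈ ℂⁿ`. -/
abbrev Dn (n : ℕ) := Derivation ℂ (On n) (On n)

/-- The tangent algebra `D_X` of the germ `X` with vanishing ideal `J`:
all vector fields `D` with `D(J) ⊆ J`. -/
def tangentAlgebra (n : ℕ) (J : Ideal (On n)) : LieSubalgebra ℂ (Dn n) where
  carrier := {D | ∀ f ∈ J, D f ∈ J}
  add_mem' := fun {D E} hD hE f hf => by
    rw [Derivation.add_apply]; exact J.add_mem (hD f hf) (hE f hf)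
  zero_mem' := fun f hf => by rw [Derivation.zero_apply]; exact J.zero_mem
  smul_mem' := fun c D hD f hf => by
    rw [Derivation.smul_apply]; exact J.smul_of_tower_mem c (hD f hf)
  lie_mem' := fun {D E} hD hE f hf => by
    rw [Derivation.commutator_apply]
    exact J.sub_mem (hD _ (hE f hf)) (hE _ (hD f hf))

section LieDefs

variable {L : Type*} [LieRing L] [LieAlgebra ℂ L]

/-- A Lie subalgebra `A` of `B` is *balanced in `B`* if `A ⊆ B`, `A` contains no nonzero
Lie ideal of `B`, but `A` contains some `a ≠ 0` with `[a,B] ⊆ A` and `[[a,B],B] ⊆ A`. -/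
def IsBalancedIn (A B : LieSubalgebra ℂ L) : Prop :=
  A ≤ B ∧
  (∀ I : LieIdeal ℂ B, (∀ x : B, x ∈ I → (x : L) ∈ A) → I = ⊥) ∧
  (∃ a : L, a ∈ A ∧ a ≠ 0 ∧ (∀ b ∈ B, ⁅a, b⁆ ∈ A) ∧
    ∀ b ∈ B, ∀ c ∈ B, ⁅⁅a, b⁆, c⁆ ∈ A)

/-- `A` is maximal balanced (= maximal visible) in `B`: maximal among balanced subalgebras. -/
def IsMaximalBalancedIn (A B : LieSubalgebra ℂ L) : Prop :=
  IsBalancedIn A B ∧ ∀ A' : LieSubalgebra ℂ L, IsBalancedIn A' B → A ≤ A' → A' = A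

/-- `A` is visible in `B`: there is a chain `A = A_m ⊆ ⋯ ⊆ A_0 = B` (`m ≥ 1`) with each
`A_k` maximal balanced in `A_{k-1}`. -/
def IsVisibleIn (A B : LieSubalgebra ℂ L) : Prop :=
  ∃ m : ℕ, 0 < m ∧ ∃ c : ℕ → LieSubalgebra ℂ L, c 0 = B ∧ c m = A ∧
    ∀ k < m, IsMaximalBalancedIn (c (k + 1)) (c k)

end LieDefs


/-! ### Evaluation at the origin and the maximal ideal -/

/-- The value at `0` of a germ at `0`. -/
def germValue {n : ℕ} (g : Filter.Germ (𝓝 (0 : Fin n → ℂ)) ℂ) : ℂ :=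
  g.liftOn (fun f => f 0) (fun _ _ h => h.eq_of_nhds)

theorem germValue_add {n : ℕ} (a b : Filter.Germ (𝓝 (0 : Fin n → ℂ)) ℂ) :
    germValue (a + b) = germValue a + germValue b := by
  induction a using Filter.Germ.inductionOn
  induction b using Filter.Germ.inductionOn
  rfl

theorem germValue_mul {n : ℕ} (a b : Filter.Germ (𝓝 (0 : Fin n → ℂ)) ℂ) :
    germValue (a * b) = germValue a * germValue b := by
  induction a using Filter.Germ.inductionOn
  induction b using Filter.Germ.inductionOn
  rfl

/-- The maximal ideal `m ⊆ O_n` of germs vanishing at the origin. -/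
def mIdeal (n : ℕ) : Ideal (On n) where
  carrier := {g | germValue g.1 = 0}
  add_mem' := fun {a b} ha hb => by
    show germValue (a.1 + b.1) = 0
    rw [germValue_add, ha, hb, add_zero]
  zero_mem' := rfl
  smul_mem' := fun c g hg => by
    show germValue (c.1 * g.1) = 0
    rw [germValue_mul, hg, mul_zero]

/-! ### Regular local rings -/

/-- A commutative ring is a regular local ring if it is Noetherian local and its maximal
ideal can be generated by `dim R` elements. -/
def IsRegularLocal (R : Type*) [CommRing R] : Prop :=
  IsNoetherianRing R ∧ IsLocalRing R ∧
    ∃ s : Finset R, (Ideal.span (s : Set R)).IsMaximal ∧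
      ((s.card : ℕ∞) : WithBot ℕ∞) = ringKrullDim R

/-! ### The singular locus -/

/-- `X = V(I)` is singular at the point corresponding to the prime `P ⊇ I` if the local
ring of `X` at that point, `(O_n/I)_P ≅ (O_n)_P / I·(O_n)_P`, is not regular. -/
def NotRegularAtPrime (n : ℕ) (I P : Ideal (On n)) [P.IsPrime] : Prop :=
  ∀ (Rp : Type) [CommRing Rp] [Algebra (On n) Rp] [IsLocalization.AtPrime Rp P],
    ¬ IsRegularLocal (Rp ⧸ I.map (algebraMap (On n) Rp))

/-- The vanishing ideal of `Sing X` (with its reduced structure), for `X = V(I)`: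
the intersection of all primes of `O_n` containing `I` at which `X` is singular. -/
def singIdeal (n : ℕ) (I : Ideal (On n)) : Ideal (On n) :=
  sInf {P | ∃ h : P.IsPrime, I ≤ P ∧ @NotRegularAtPrime n I P h}

/-! ### The integral variety -/

/-- The ideal `I(A) = {g ∈ O_n : g·D ⊆ A}` associated to a Lie subalgebra `A ⊆ D`;
the integral variety `X(A)` is the germ with vanishing ideal `√I(A)`. -/
def intIdeal {n : ℕ} (A : LieSubalgebra ℂ (Dn n)) : Ideal (On n) where
  carrier := {g | ∀ D : Dn n, g • D ∈ A}
  add_mem' := fun {a b} ha hb D => by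
    rw [add_smul]; exact A.add_mem (ha D) (hb D)
  zero_mem' := fun D => by rw [zero_smul]; exact A.zero_mem
  smul_mem' := fun c g hg D => by
    rw [smul_eq_mul, mul_comm, mul_smul]; exact hg (c • D)

/-! ### The coefficientwise topology -/

/-- The `k`-th Taylor coefficient at `0` of a holomorphic germ (as a continuous
multilinear map), given by the `k`-th iterated derivative at `0`. -/
def taylorCoeff {n : ℕ} (g : On n) (k : ℕ) :
    ContinuousMultilinearMap ℂ (fun _ : Fin k => (Fin n → ℂ)) ℂ :=
  iteratedFDeriv ℂ k (Classical.choose (mem_On.mp g.2)) 0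

/-- The coefficientwise topology on `O_n`: the topology of convergence of all Taylor
coefficients at `0`. -/
instance OnTopology (n : ℕ) : TopologicalSpace (On n) :=
  TopologicalSpace.induced (fun g k => taylorCoeff g k) inferInstance

/-- The `i`-th coordinate function as a holomorphic germ. -/
def coordGerm (n : ℕ) (i : Fin n) : On n :=
  ⟨Filter.Germ.ofFun (fun z => z i), mem_On.mpr
    ⟨fun z => z i, (ContinuousLinearMap.proj (R := ℂ) (φ := fun _ : Fin n => ℂ) i).analyticAt 0, rfl⟩⟩

/-- The topology on `D ≅ O_nⁿ` induced from the coefficientwise topology on `O_n`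
via `D ↦ (D x₁, …, D xₙ)`. -/
instance DnTopology (n : ℕ) : TopologicalSpace (Dn n) :=
  TopologicalSpace.induced (fun D : Dn n => fun i : Fin n => D (coordGerm n i)) inferInstance

/-! ### Conjugation of vector fields by automorphisms -/

/-- The action `Φ = φ*` of an automorphism of `O_n` on vector fields:
`Φ(D) = φ* ∘ D ∘ (φ*)⁻¹`. -/
def conjDer {n : ℕ} (ψ : On n ≃ₐ[ℂ] On n) (D : Dn n) : Dn n where
  toLinearMap := ψ.toLinearMap ∘ₗ D.toLinearMap ∘ₗ ψ.symm.toLinearMap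
  map_one_eq_zero' := by simp
  leibniz' := fun a b => by
    simp only [LinearMap.coe_comp, Function.comp_apply, AlgEquiv.toLinearMap_apply,
      Derivation.coeFn_coe, map_mul, Derivation.leibniz, map_add, smul_eq_mul,
      AlgEquiv.apply_symm_apply]


/-- The Lie algebra `D_0` of vector fields vanishing at `0`: all `D` with `D(O_n) ⊆ m`. -/
def D0 (n : ℕ) : LieSubalgebra ℂ (Dn n) where
  carrier := {D | ∀ f : On n, D f ∈ mIdeal n}
  add_mem' := fun {D E} hD hE f => by
    rw [Derivation.add_apply]; exact (mIdeal n).add_mem (hD f) (hE f)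
  zero_mem' := fun f => by rw [Derivation.zero_apply]; exact (mIdeal n).zero_mem
  smul_mem' := fun c D hD f => by
    rw [Derivation.smul_apply]; exact (mIdeal n).smul_of_tower_mem c (hD f)
  lie_mem' := fun {D E} hD hE f => by
    rw [Derivation.commutator_apply]; exact (mIdeal n).sub_mem (hD _) (hE _)



/-! ### Auxiliary lemmas for the main theorem -/

theorem mem_iInfLie {L : Type*} [LieRing L] [LieAlgebra ℂ L] {ι : Sort*}
    (f : ι → LieSubalgebra ℂ L) {x : L} :
    x ∈ ⨅ i, f i ↔ ∀ i, x ∈ f i := by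
  rw [iInf, ← SetLike.mem_coe, LieSubalgebra.coe_sInf]
  simp

theorem mem_biInfLie {L : Type*} [LieRing L] [LieAlgebra ℂ L] {ι : Type*}
    (s : Finset ι) (f : ι → LieSubalgebra ℂ L) {x : L} :
    x ∈ ⨅ i ∈ s, f i ↔ ∀ i ∈ s, x ∈ f i := by
  simp only [mem_iInfLie]

theorem mem_tangentAlgebra {n : ℕ} {J : Ideal (On n)} {D : Dn n} :
    D ∈ tangentAlgebra n J ↔ ∀ f ∈ J, D f ∈ J := Iff.rfl

theorem smul_apply' {n : ℕ} (g : On n) (D : Dn n) (f : On n) :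
    (g • D) f = g * D f := rfl

theorem smul_mem_tangentAlgebra {n : ℕ} {J : Ideal (On n)} (hJ : J.IsPrime)
    (g : On n) (D : Dn n) :
    g • D ∈ tangentAlgebra n J ↔ g ∈ J ∨ D ∈ tangentAlgebra n J := by
  constructor
  · intro hmem
    by_cases hg : g ∈ J
    · exact Or.inl hg
    · refine Or.inr (fun f hf => ?_)
      have := hmem f hf
      rw [smul_apply'] at this
      rcases hJ.mem_or_mem this with h | h
      · exact absurd h hg
      · exact h
  · rintro (hg | hD) f hf
    · rw [smul_apply']; exact J.mul_mem_right _ hg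
    · rw [smul_apply']; exact J.mul_mem_left _ (hD f hf)

/-- The key extraction step: under the hypotheses of the main theorem, `S ⊆ S'`. -/
theorem key_subset (n : ℕ) (S S' : Finset (Ideal (On n)))
    (hS : ∀ J ∈ S, J.IsPrime) (hS' : ∀ J ∈ S', J.IsPrime)
    (hirr : ∀ T ⊂ S, (⨅ J ∈ T, tangentAlgebra n J) ≠ ⨅ J ∈ S, tangentAlgebra n J)
    (h : (⨅ J ∈ S, tangentAlgebra n J) = ⨅ J ∈ S', tangentAlgebra n J) :
    S ⊆ S' := by
  classical
  intro J hJS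
  have hJp := hS J hJS
  -- find a derivation in all other tangent algebras but not in D_J
  have hT : S.erase J ⊂ S := Finset.erase_ssubset hJS
  have hne := hirr _ hT
  have hle : (⨅ K ∈ S, tangentAlgebra n K) ≤ ⨅ K ∈ S.erase J, tangentAlgebra n K := by
    intro D hD
    rw [mem_biInfLie] at hD ⊢
    exact fun K hK => hD K (Finset.mem_of_mem_erase hK)
  obtain ⟨D, hDT, hDS⟩ : ∃ D, D ∈ (⨅ K ∈ S.erase J, tangentAlgebra n K) ∧
      D ∉ (⨅ K ∈ S, tangentAlgebra n K) := by
    by_contra hc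
    push_neg at hc
    exact hne (le_antisymm hc hle)
  rw [mem_biInfLie] at hDT
  have hDJ : D ∉ tangentAlgebra n J := by
    intro hDJ
    apply hDS
    rw [mem_biInfLie]
    intro K hK
    by_cases hKJ : K = J
    · exact hKJ ▸ hDJ
    · exact hDT K (Finset.mem_erase.2 ⟨hKJ, hK⟩)
  set T' : Finset (Ideal (On n)) := S'.filter (fun K => D ∉ tangentAlgebra n K) with hT'def
  -- J ⊆ every member of T'
  have hsub : ∀ g ∈ J, ∀ K ∈ T', g ∈ K := by
    intro g hg K hK
    rw [hT'def, Finset.mem_filter] at hK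
    have hgD : g • D ∈ ⨅ K ∈ S, tangentAlgebra n K := by
      rw [mem_biInfLie]
      intro K' hK'
      by_cases hKJ : K' = J
      · exact (smul_mem_tangentAlgebra (hS K' hK') g D).2 (Or.inl (hKJ ▸ hg))
      · exact (smul_mem_tangentAlgebra (hS K' hK') g D).2
          (Or.inr (hDT K' (Finset.mem_erase.2 ⟨hKJ, hK'⟩)))
    rw [h, mem_biInfLie] at hgD
    rcases (smul_mem_tangentAlgebra (hS' K hK.1) g D).1 (hgD K hK.1) with hgK | hDK
    · exact hgK
    · exact absurd hDK hK.2
  -- intersection of T' ⊆ J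
  have hsup : T'.inf id ≤ J := by
    intro g hg
    rw [Submodule.mem_finsetInf] at hg
    have hgD : g • D ∈ ⨅ K ∈ S', tangentAlgebra n K := by
      rw [mem_biInfLie]
      intro K hK
      by_cases hDK : D ∈ tangentAlgebra n K
      · exact (smul_mem_tangentAlgebra (hS' K hK) g D).2 (Or.inr hDK)
      · have hKT' : K ∈ T' := by rw [hT'def, Finset.mem_filter]; exact ⟨hK, hDK⟩
        exact (smul_mem_tangentAlgebra (hS' K hK) g D).2 (Or.inl (hg K hKT'))
    rw [← h, mem_biInfLie] at hgD
    rcases (smul_mem_tangentAlgebra hJp g D).1 (hgD J hJS) with hgJ | hDJ'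
    · exact hgJ
    · exact absurd hDJ' hDJ
  obtain ⟨K, hKT', hKJ⟩ := (hJp.inf_le' (f := id)).1 hsup
  have hKS' : K ∈ S' := (Finset.mem_filter.1 hKT').1
  have : J = K := le_antisymm (fun g hg => hsub g hg K hKT') hKJ
  exact this ▸ hKS'

/-- Irredundant finite families of irreducible reduced analytic germs are uniquely determined
by their tangent algebra: if `D_𝒳 = D_𝒳′` for irredundant families `𝒳, 𝒳′` of irreducible
germs (i.e. of prime ideals), then `𝒳 = 𝒳′` as sets of germs.  In particular two irreducible
germs (with tangent algebra `≠ D`, i.e. forming irredundant singleton families) having the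
same tangent algebra coincide. -/
theorem irredundant_family_determined_by_tangentAlgebra (n : ℕ)
    (S S' : Finset (Ideal (On n)))
    (hS : ∀ J ∈ S, J.IsPrime) (hS' : ∀ J ∈ S', J.IsPrime)
    (hirr : ∀ T ⊂ S, (⨅ J ∈ T, tangentAlgebra n J) ≠ ⨅ J ∈ S, tangentAlgebra n J)
    (hirr' : ∀ T ⊂ S', (⨅ J ∈ T, tangentAlgebra n J) ≠ ⨅ J ∈ S', tangentAlgebra n J)
    (h : (⨅ J ∈ S, tangentAlgebra n J) = ⨅ J ∈ S', tangentAlgebra n J) :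
    S = S' ∧
    ∀ J J' : Ideal (On n), J.IsPrime → J'.IsPrime →
      tangentAlgebra n J ≠ ⊤ → tangentAlgebra n J' ≠ ⊤ →
      tangentAlgebra n J = tangentAlgebra n J' → J = J' := by
  classical
  constructor
  · exact le_antisymm (key_subset n S S' hS hS' hirr h)
      (key_subset n S' S hS' hS hirr' h.symm)
  · intro J J' hJ hJ' hneJ hneJ' heq
    have h1 : ∃ D : Dn n, D ∉ tangentAlgebra n J' := by
      by_contra hc
      push_neg at hc
      exact hneJ' (by ext D; simp [hc D])
    obtain ⟨D, hD⟩ := h1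
    have hD' : D ∉ tangentAlgebra n J := heq ▸ hD
    apply le_antisymm
    · intro g hg
      have : g • D ∈ tangentAlgebra n J' :=
        heq ▸ (smul_mem_tangentAlgebra hJ g D).2 (Or.inl hg)
      rcases (smul_mem_tangentAlgebra hJ' g D).1 this with h | h
      · exact h
      · exact absurd h hD
    · intro g hg
      have : g • D ∈ tangentAlgebra n J :=
        heq ▸ (smul_mem_tangentAlgebra hJ' g D).2 (Or.inl hg)
      rcases (smul_mem_tangentAlgebra hJ g D).1 this with h | h
      · exact h
      · exact absurd h hD'


end
end

section
/- Every reduced analytic germ X ⊆ (ℂⁿ,0) different from ∅ and from (ℂⁿ,0) is recovered from its tangent algebra as its integral variety: X(D_X) = X. Equivalently, the ideal I(D_X) = {g ∈ O_n : g·D ∈ D_X for all D ∈ D} satisfies √I(D_X) = I_X; in particular I_X ⊆ I(D_X) and I(D_X) ⊆ I_X. -/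
open Filter Topology

set_option synthInstance.maxHeartbeats 1000000
set_option maxHeartbeats 1000000

noncomputable section

/-! ### Auxiliary material for the main theorem -/

namespace HMAux

open Filter

variable {n : ℕ}

theorem germValue_ofFun (F : (Fin n → ℂ) → ℂ) :
    germValue (Filter.Germ.ofFun (l := 𝓝 (0 : Fin n → ℂ)) F) = F 0 := rfl

/-- A chosen analytic representative of a germ in `O_n`. -/
def repF (f : On n) : (Fin n → ℂ) → ℂ := Classical.choose (mem_On.mp f.2)

theorem repF_analyticAt (f : On n) : AnalyticAt ℂ (repF f) 0 :=
  (Classical.choose_spec (mem_On.mp f.2)).1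

theorem repF_spec (f : On n) : (f : Filter.Germ (𝓝 (0 : Fin n → ℂ)) ℂ) = Filter.Germ.ofFun (repF f) :=
  (Classical.choose_spec (mem_On.mp f.2)).2

theorem repF_eventuallyEq {f : On n} {F : (Fin n → ℂ) → ℂ}
    (hF : (f : Filter.Germ (𝓝 (0 : Fin n → ℂ)) ℂ) = Filter.Germ.ofFun F) :
    repF f =ᶠ[𝓝 0] F := by
  have : (Filter.Germ.ofFun (repF f) : Filter.Germ (𝓝 (0 : Fin n → ℂ)) ℂ) = Filter.Germ.ofFun F := by
    rw [← repF_spec, hF]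
  exact Filter.Germ.coe_eq.mp this

/-- The `i`-th partial derivative at the level of functions. -/
def pd (i : Fin n) (F : (Fin n → ℂ) → ℂ) : (Fin n → ℂ) → ℂ :=
  fun z => fderiv ℂ F z (Pi.single i 1)

theorem pd_analyticAt {F : (Fin n → ℂ) → ℂ} (hF : AnalyticAt ℂ F 0) (i : Fin n) :
    AnalyticAt ℂ (pd i F) 0 := by
  have h1 : AnalyticAt ℂ (fderiv ℂ F) 0 := hF.fderiv
  have h2 := ((ContinuousLinearMap.apply ℂ ℂ ((Pi.single i 1 : Fin n → ℂ))).analyticAt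
    (fderiv ℂ F 0)).comp h1
  exact h2

theorem eventually_differentiableAt {F : (Fin n → ℂ) → ℂ} (hF : AnalyticAt ℂ F 0) :
    ∀ᶠ z in 𝓝 (0 : Fin n → ℂ), DifferentiableAt ℂ F z :=
  hF.eventually_analyticAt.mono fun _ hz => hz.differentiableAt

theorem pd_congr {F G : (Fin n → ℂ) → ℂ} (h : F =ᶠ[𝓝 0] G) (i : Fin n) :
    pd i F =ᶠ[𝓝 0] pd i G := by
  filter_upwards [h.eventually_nhds] with z hz
  unfold pd
  rw [Filter.EventuallyEq.fderiv_eq hz]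

theorem pd_add {F G : (Fin n → ℂ) → ℂ} (hF : AnalyticAt ℂ F 0) (hG : AnalyticAt ℂ G 0)
    (i : Fin n) : pd i (F + G) =ᶠ[𝓝 0] pd i F + pd i G := by
  filter_upwards [eventually_differentiableAt hF, eventually_differentiableAt hG] with z h1 h2
  have : fderiv ℂ (fun y => F y + G y) z = fderiv ℂ F z + fderiv ℂ G z := fderiv_add h1 h2
  simp only [pd, Pi.add_apply]
  rw [show (F + G) = fun y => F y + G y from rfl, this, ContinuousLinearMap.add_apply]

theorem pd_smul {F : (Fin n → ℂ) → ℂ} (hF : AnalyticAt ℂ F 0) (c : ℂ) (i : Fin n) :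
    pd i (c • F) =ᶠ[𝓝 0] c • pd i F := by
  filter_upwards [eventually_differentiableAt hF] with z h1
  have : fderiv ℂ (fun y => c • F y) z = c • fderiv ℂ F z := fderiv_const_smul h1 c
  simp only [pd, Pi.smul_apply]
  rw [show (c • F) = fun y => c • F y from rfl, this, ContinuousLinearMap.smul_apply]

theorem pd_mul {F G : (Fin n → ℂ) → ℂ} (hF : AnalyticAt ℂ F 0) (hG : AnalyticAt ℂ G 0)
    (i : Fin n) : pd i (F * G) =ᶠ[𝓝 0] F * pd i G + G * pd i F := by
  filter_upwards [eventually_differentiableAt hF, eventually_differentiableAt hG] with z h1 h2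
  have : fderiv ℂ (fun y => F y * G y) z = F z • fderiv ℂ G z + G z • fderiv ℂ F z :=
    fderiv_mul h1 h2
  simp only [pd, Pi.add_apply, Pi.mul_apply]
  rw [show (F * G) = fun y => F y * G y from rfl, this]
  simp [smul_eq_mul]

theorem pd_const (c : ℂ) (i : Fin n) : pd i (fun _ => c) = 0 := by
  funext z
  simp [pd, fderiv_const]

/-- The `i`-th partial derivative as a map `O_n → O_n`. -/
def pdOn (i : Fin n) (f : On n) : On n :=
  ⟨Filter.Germ.ofFun (pd i (repF f)),
    mem_On.mpr ⟨_, pd_analyticAt (repF_analyticAt f) i, rfl⟩⟩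

theorem pdOn_val {i : Fin n} {f : On n} {F : (Fin n → ℂ) → ℂ}
    (hF : (f : Filter.Germ (𝓝 (0 : Fin n → ℂ)) ℂ) = Filter.Germ.ofFun F) :
    ((pdOn i f : On n) : Filter.Germ (𝓝 (0 : Fin n → ℂ)) ℂ) = Filter.Germ.ofFun (pd i F) :=
  Filter.Germ.coe_eq.mpr (pd_congr (repF_eventuallyEq hF) i)

/-- The `i`-th partial derivative as a derivation on `O_n`. -/
def pdDer (i : Fin n) : Dn n where
  toFun := pdOn i
  map_add' f g := by
    apply Subtype.ext
    have hfg : ((f + g : On n) : Filter.Germ (𝓝 (0 : Fin n → ℂ)) ℂ)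
        = Filter.Germ.ofFun (repF f + repF g) := by
      push_cast [repF_spec f, repF_spec g]
      rfl
    rw [show ((pdOn i f + pdOn i g : On n) : Filter.Germ (𝓝 (0 : Fin n → ℂ)) ℂ)
      = (pdOn i f : Filter.Germ (𝓝 (0 : Fin n → ℂ)) ℂ) + (pdOn i g) from rfl]
    rw [pdOn_val hfg, pdOn_val (repF_spec f), pdOn_val (repF_spec g)]
    exact Filter.Germ.coe_eq.mpr (pd_add (repF_analyticAt f) (repF_analyticAt g) i)
  map_smul' c f := by
    apply Subtype.ext
    have hcf : ((c • f : On n) : Filter.Germ (𝓝 (0 : Fin n → ℂ)) ℂ)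
        = Filter.Germ.ofFun (c • repF f) := by
      push_cast [repF_spec f]
      rfl
    rw [RingHom.id_apply]
    rw [show ((c • pdOn i f : On n) : Filter.Germ (𝓝 (0 : Fin n → ℂ)) ℂ)
      = c • (pdOn i f : Filter.Germ (𝓝 (0 : Fin n → ℂ)) ℂ) from rfl]
    rw [pdOn_val hcf, pdOn_val (repF_spec f)]
    exact Filter.Germ.coe_eq.mpr (pd_smul (repF_analyticAt f) c i)
  map_one_eq_zero' := by
    apply Subtype.ext
    have h1 : ((1 : On n) : Filter.Germ (𝓝 (0 : Fin n → ℂ)) ℂ)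
        = Filter.Germ.ofFun (fun _ => (1 : ℂ)) := rfl
    show ((pdOn i 1 : On n) : Filter.Germ (𝓝 (0 : Fin n → ℂ)) ℂ) = _
    rw [pdOn_val h1, pd_const]
    rfl
  leibniz' a b := by
    apply Subtype.ext
    have hab : ((a * b : On n) : Filter.Germ (𝓝 (0 : Fin n → ℂ)) ℂ)
        = Filter.Germ.ofFun (repF a * repF b) := by
      push_cast [repF_spec a, repF_spec b]
      rfl
    show ((pdOn i (a * b) : On n) : Filter.Germ (𝓝 (0 : Fin n → ℂ)) ℂ)
      = ((a • pdOn i b + b • pdOn i a : On n) : Filter.Germ (𝓝 (0 : Fin n → ℂ)) ℂ)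
    rw [show ((a • pdOn i b + b • pdOn i a : On n) : Filter.Germ (𝓝 (0 : Fin n → ℂ)) ℂ)
      = (a : Filter.Germ (𝓝 (0 : Fin n → ℂ)) ℂ) * (pdOn i b)
        + (b : Filter.Germ (𝓝 (0 : Fin n → ℂ)) ℂ) * (pdOn i a) from rfl]
    rw [pdOn_val hab, pdOn_val (repF_spec a), pdOn_val (repF_spec b),
      repF_spec a, repF_spec b]
    exact Filter.Germ.coe_eq.mpr (pd_mul (repF_analyticAt a) (repF_analyticAt b) i)

/-- Iterated partial derivatives at the level of functions. -/
def pdIter : List (Fin n) → ((Fin n → ℂ) → ℂ) → ((Fin n → ℂ) → ℂ)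
  | [], F => F
  | i :: l, F => pdIter l (pd i F)

theorem pdIter_analyticAt : ∀ (l : List (Fin n)) {F : (Fin n → ℂ) → ℂ},
    AnalyticAt ℂ F 0 → AnalyticAt ℂ (pdIter l F) 0
  | [], _, hF => hF
  | i :: l, _, hF => pdIter_analyticAt l (pd_analyticAt hF i)

/-- Iterated application of derivations. -/
def applyD : List (Dn n) → On n → On n
  | [], f => f
  | D :: l, f => applyD l (D f)

theorem applyD_val : ∀ (l : List (Fin n)) (f : On n) (F : (Fin n → ℂ) → ℂ),
    AnalyticAt ℂ F 0 → (f : Filter.Germ (𝓝 (0 : Fin n → ℂ)) ℂ) = Filter.Germ.ofFun F →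
    ((applyD (l.map pdDer) f : On n) : Filter.Germ (𝓝 (0 : Fin n → ℂ)) ℂ)
      = Filter.Germ.ofFun (pdIter l F)
  | [], f, F, _, hF => hF
  | i :: l, f, F, hA, hF => by
    show ((applyD (l.map pdDer) (pdDer i f) : On n) : Filter.Germ (𝓝 (0 : Fin n → ℂ)) ℂ) = _
    exact applyD_val l (pdDer i f) (pd i F) (pd_analyticAt hA i) (pdOn_val hF)

/-- The key analytic step: an iterated derivative at a tuple of basis vectors ending with
`e_j` equals an iterated derivative of the `j`-th partial derivative. -/
theorem iteratedFDeriv_succ_basis {F : (Fin n → ℂ) → ℂ} (hF : AnalyticAt ℂ F 0) (k : ℕ)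
    (m : Fin (k + 1) → (Fin n → ℂ)) (j : Fin n) (hm : m (Fin.last k) = Pi.single j 1) :
    iteratedFDeriv ℂ (k + 1) F 0 m = iteratedFDeriv ℂ k (pd j F) 0 (Fin.init m) := by
  obtain ⟨s, hs_mem, hs⟩ := hF.exists_mem_nhds_analyticOnNhd
  set U : Set (Fin n → ℂ) := interior s with hU
  have hUo : IsOpen U := isOpen_interior
  have h0U : (0 : Fin n → ℂ) ∈ U := mem_interior_iff_mem_nhds.mpr hs_mem
  have hsU : AnalyticOnNhd ℂ F U := hs.mono interior_subset
  have hfd : AnalyticOnNhd ℂ (fderiv ℂ F) U := hsU.fderiv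
  have hcd : ContDiffOn ℂ ⊤ (fderiv ℂ F) U := hfd.contDiffOn hUo.uniqueDiffOn
  set g : ((Fin n → ℂ) →L[ℂ] ℂ) →L[ℂ] ℂ := ContinuousLinearMap.apply ℂ ℂ (Pi.single j 1)
  have hcomp : pd j F = g ∘ (fderiv ℂ F) := rfl
  rw [iteratedFDeriv_succ_apply_right, hm]
  have h1 : iteratedFDeriv ℂ k (fun y => fderiv ℂ F y) 0
      = iteratedFDerivWithin ℂ k (fderiv ℂ F) U 0 :=
    (iteratedFDerivWithin_of_isOpen k hUo h0U).symm
  have h2 : iteratedFDeriv ℂ k (pd j F) 0 = iteratedFDerivWithin ℂ k (pd j F) U 0 :=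
    (iteratedFDerivWithin_of_isOpen k hUo h0U).symm
  have h3 : iteratedFDerivWithin ℂ k (g ∘ fderiv ℂ F) U 0
      = g.compContinuousMultilinearMap (iteratedFDerivWithin ℂ k (fderiv ℂ F) U 0) :=
    g.iteratedFDerivWithin_comp_left (hcd 0 h0U) hUo.uniqueDiffOn h0U le_top
  rw [h1, h2, hcomp, h3]
  rfl

theorem iteratedFDeriv_eq_zero : ∀ (k : ℕ) (F : (Fin n → ℂ) → ℂ), AnalyticAt ℂ F 0 →
    (∀ l : List (Fin n), pdIter l F 0 = 0) → iteratedFDeriv ℂ k F 0 = 0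
  | 0, F, _, H => by
    ext m
    have := H []
    simp only [pdIter] at this
    simp [this]
  | (k + 1), F, hF, H => by
    have hbasis : ∀ v : Fin (k + 1) → Fin n,
        iteratedFDeriv ℂ (k + 1) F 0 (fun s => Pi.single (v s) (1 : ℂ)) = 0 := by
      intro v
      rw [iteratedFDeriv_succ_basis hF k _ (v (Fin.last k)) rfl]
      have hind := iteratedFDeriv_eq_zero k (pd (v (Fin.last k)) F)
        (pd_analyticAt hF _) (fun l => H (v (Fin.last k) :: l))
      rw [hind]
      rfl
    apply ContinuousMultilinearMap.toMultilinearMap_injective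
    refine Module.Basis.ext_multilinear (fun _ => Pi.basisFun ℂ (Fin n)) fun v => ?_
    simpa [Pi.basisFun_apply] using hbasis v

theorem eventually_zero_of_pdIter {F : (Fin n → ℂ) → ℂ} (hF : AnalyticAt ℂ F 0)
    (H : ∀ l : List (Fin n), pdIter l F 0 = 0) : F =ᶠ[𝓝 0] 0 := by
  obtain ⟨p, hp⟩ := id hF
  obtain ⟨r, hball⟩ := hp
  have hz : ∀ k, iteratedFDeriv ℂ k F 0 = 0 := fun k => iteratedFDeriv_eq_zero k F hF H
  have hev : ∀ y ∈ EMetric.ball (0 : Fin n → ℂ) r, F y = 0 := by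
    intro y hy
    have h := hball.hasSum_iteratedFDeriv hy
    simp only [hz, ContinuousMultilinearMap.zero_apply, smul_zero, zero_add] at h
    exact (h.unique hasSum_zero)
  filter_upwards [EMetric.ball_mem_nhds (0 : Fin n → ℂ) hball.r_pos] with y hy
  exact hev y hy

/-- Elements with nonzero value at the origin are units in `O_n`. -/
theorem isUnit_of_germValue_ne_zero {x : On n}
    (h0 : germValue (x : Filter.Germ (𝓝 (0 : Fin n → ℂ)) ℂ) ≠ 0) : IsUnit x := by
  have hval : repF x 0 ≠ 0 := by
    rwa [repF_spec x, germValue_ofFun] at h0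
  have hinv : AnalyticAt ℂ (fun z => (repF x z)⁻¹) 0 := (repF_analyticAt x).inv hval
  have hymem : (Filter.Germ.ofFun (fun z => (repF x z)⁻¹) : Filter.Germ (𝓝 (0 : Fin n → ℂ)) ℂ)
      ∈ On n := mem_On.mpr ⟨fun z => (repF x z)⁻¹, hinv, rfl⟩
  refine IsUnit.of_mul_eq_one (a := x) ⟨Filter.Germ.ofFun (fun z => (repF x z)⁻¹), hymem⟩ ?_
  apply Subtype.ext
  have hx : ((x * ⟨Filter.Germ.ofFun (fun z => (repF x z)⁻¹), hymem⟩ : On n) :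
      Filter.Germ (𝓝 (0 : Fin n → ℂ)) ℂ)
      = Filter.Germ.ofFun (repF x) * Filter.Germ.ofFun (fun z => (repF x z)⁻¹) := by
    push_cast [repF_spec x]
    rfl
  rw [hx]
  show _ = ((1 : On n) : Filter.Germ (𝓝 (0 : Fin n → ℂ)) ℂ)
  rw [show ((1 : On n) : Filter.Germ (𝓝 (0 : Fin n → ℂ)) ℂ) = Filter.Germ.ofFun (fun _ => (1:ℂ)) from rfl,
    show (Filter.Germ.ofFun (repF x) * Filter.Germ.ofFun (fun z => (repF x z)⁻¹) :
      Filter.Germ (𝓝 (0 : Fin n → ℂ)) ℂ) = Filter.Germ.ofFun (fun z => repF x z * (repF x z)⁻¹) from rfl]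
  refine Filter.Germ.coe_eq.mpr ?_
  filter_upwards [(repF_analyticAt x).continuousAt.eventually_ne hval] with z hz
  exact mul_inv_cancel₀ hz

theorem germValue_eq_zero_of_mem_prime {P : Ideal (On n)} (hP : P.IsPrime) {x : On n}
    (hx : x ∈ P) : germValue (x : Filter.Germ (𝓝 (0 : Fin n → ℂ)) ℂ) = 0 := by
  by_contra h0
  exact hP.ne_top (P.eq_top_of_isUnit_mem hx (isUnit_of_germValue_ne_zero h0))

/-- The key algebraic step. -/
theorem step {J : Ideal (On n)} {g : On n} (hg : g ∈ intIdeal (tangentAlgebra n J))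
    {k : ℕ} {u : On n} (h : g ^ k * u ∈ J) (D : Dn n) : g ^ (k + 1) * D u ∈ J := by
  have hgD : ∀ f ∈ J, (g • D) f ∈ J := hg D
  have h1 : g * D (g ^ k * u) ∈ J := by
    have := hgD _ h
    rwa [Derivation.smul_apply, smul_eq_mul] at this
  cases k with
  | zero =>
    simpa using h1
  | succ m =>
    have e2 : D (g ^ (m + 1) * u) = g ^ (m + 1) * D u + u * D (g ^ (m + 1)) := by
      rw [Derivation.leibniz]
      simp [smul_eq_mul, add_comm]
    have e3 : D (g ^ (m + 1)) = (m + 1) • g ^ m • D g := by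
      simpa using Derivation.leibniz_pow D g (m + 1)
    have key : g ^ (m + 1 + 1) * D u
        = g * D (g ^ (m + 1) * u) - (m + 1 : ℕ) • (D g * (g ^ (m + 1) * u)) := by
      rw [e2, e3]
      simp only [smul_eq_mul, nsmul_eq_mul]
      ring
    rw [key]
    exact J.sub_mem h1 (nsmul_mem (J.mul_mem_left (D g) h) _)

theorem chain {J : Ideal (On n)} {g : On n} (hg : g ∈ intIdeal (tangentAlgebra n J)) :
    ∀ (l : List (Dn n)) (u : On n) (k : ℕ), g ^ k * u ∈ J →
      g ^ (k + l.length) * applyD l u ∈ J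
  | [], u, k, h => by simpa [applyD] using h
  | D :: l, u, k, h => by
    have h1 : g ^ (k + 1) * D u ∈ J := step hg h D
    have h2 := chain hg l (D u) (k + 1) h1
    show g ^ (k + (l.length + 1)) * applyD l (D u) ∈ J
    rwa [show k + (l.length + 1) = k + 1 + l.length by omega]

end HMAux

/-- Every reduced analytic germ `X ≠ ∅, (ℂⁿ,0)` is recovered from its tangent algebra as its
integral variety: `X(D_X) = X`, i.e. `√I(D_X) = I_X`; in particular `I_X ⊆ I(D_X)` and
`I(D_X) ⊆ I_X`. -/
theorem integral_variety_of_tangentAlgebra (n : ℕ) (J : Ideal (On n)) (hJ : J.IsRadical)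
    (h1 : J ≠ ⊤) (h2 : J ≠ ⊥) :
    (intIdeal (tangentAlgebra n J)).radical = J ∧
    J ≤ intIdeal (tangentAlgebra n J) ∧ intIdeal (tangentAlgebra n J) ≤ J := by
  have hJI : J ≤ intIdeal (tangentAlgebra n J) := by
    intro g hgJ
    intro D
    intro f hf
    show (g • D) f ∈ J
    rw [Derivation.smul_apply, smul_eq_mul]
    exact J.mul_mem_right _ hgJ
  have hIJ : intIdeal (tangentAlgebra n J) ≤ J := by
    intro g hg
    by_contra hgJ
    have hg_rad : g ∉ J.radical := by rwa [hJ.radical]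
    rw [Ideal.radical_eq_sInf] at hg_rad
    have : ¬ ∀ P ∈ {P : Ideal (On n) | J ≤ P ∧ P.IsPrime}, g ∈ P := by
      intro hall
      exact hg_rad (Submodule.mem_sInf.mpr hall)
    push_neg at this
    obtain ⟨P, ⟨hJP, hP⟩, hgP⟩ := this
    apply h2
    rw [eq_bot_iff]
    intro f hf
    rw [Ideal.mem_bot]
    have key : ∀ l : List (Fin n), HMAux.pdIter l (HMAux.repF f) 0 = 0 := by
      intro l
      have hc : g ^ (0 + (l.map HMAux.pdDer).length) * HMAux.applyD (l.map HMAux.pdDer) f ∈ J :=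
        HMAux.chain hg (l.map HMAux.pdDer) f 0 (by simpa using hf)
      have hmem : HMAux.applyD (l.map HMAux.pdDer) f ∈ P := by
        rcases hP.mem_or_mem (hJP hc) with hc' | hc'
        · exact absurd (hP.mem_of_pow_mem _ hc') hgP
        · exact hc'
      have hval := HMAux.germValue_eq_zero_of_mem_prime hP hmem
      rwa [HMAux.applyD_val l f (HMAux.repF f) (HMAux.repF_analyticAt f) (HMAux.repF_spec f),
        HMAux.germValue_ofFun] at hval
    have hzero := HMAux.eventually_zero_of_pdIter (HMAux.repF_analyticAt f) key
    apply Subtype.ext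
    rw [HMAux.repF_spec f]
    show Filter.Germ.ofFun (HMAux.repF f) = ((0 : On n) : Filter.Germ (𝓝 (0 : Fin n → ℂ)) ℂ)
    exact Filter.Germ.coe_eq.mpr hzero
  have heq : intIdeal (tangentAlgebra n J) = J := le_antisymm hIJ hJI
  exact ⟨by rw [heq]; exact hJ.radical, hJI, hIJ⟩

end
end

section
/- Let A be a balanced Lie subalgebra of D = Der_ℂ(O_n). Then the integral variety X(A) is different from ∅ and from (ℂⁿ,0); equivalently, the ideal I(A) = {g ∈ O_n : g·D ∈ A for all D ∈ D} satisfies I(A) ≠ 0 and I(A) ≠ O_n. -/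
open Filter Topology

set_option synthInstance.maxHeartbeats 1000000
set_option maxHeartbeats 1000000

noncomputable section

/-- Germ rings of `ℂ`-valued functions are reduced. -/
theorem germ_sq_zero {α : Type*} {l : Filter α} (g : Filter.Germ l ℂ) (h : g * g = 0) : g = 0 := by
  induction g using Filter.Germ.inductionOn with
  | _ f =>
    rw [← Filter.Germ.coe_mul] at h
    have h' : (f * f : α → ℂ) =ᶠ[l] (0 : α → ℂ) := Filter.Germ.coe_eq.mp h
    exact Filter.Germ.coe_eq.mpr (h'.mono fun x hx => mul_self_eq_zero.mp hx)

/-- `O_n` is reduced. -/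
theorem On_sq_zero {n : ℕ} (x : On n) (h : x * x = 0) : x = 0 := by
  apply Subtype.ext
  have h1 : (x : Filter.Germ (𝓝 (0 : Fin n → ℂ)) ℂ) * (x : Filter.Germ (𝓝 (0 : Fin n → ℂ)) ℂ) = 0 := by
    exact_mod_cast congrArg Subtype.val h
  exact germ_sq_zero _ h1

theorem key1 {n : ℕ} (a : Dn n) (f : On n) : ⁅a, f • a⁆ = (a f) • a := by
  ext x
  simp only [Derivation.commutator_apply, Derivation.smul_apply, smul_eq_mul,
    Derivation.leibniz]
  ring

theorem key2 {n : ℕ} (a : Dn n) (f g : On n) (E : Dn n) :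
    ((g * a (a f)) • E + (g * E (a f)) • a : Dn n) =
      ⁅a, ((a f) * g) • E⁆ - ⁅(a f) • a, g • E⁆ := by
  ext x
  simp only [Derivation.add_apply, Derivation.sub_apply, Derivation.smul_apply,
    Derivation.commutator_apply, smul_eq_mul, Derivation.leibniz]
  ring

/-- If `A` is a balanced Lie subalgebra of `D` then its integral variety `X(A)` is different
from `∅` and from `(ℂⁿ,0)`; equivalently `I(A) ≠ 0` and `I(A) ≠ O_n`. -/
theorem intIdeal_ne_bot_ne_top_of_balanced (n : ℕ) (A : LieSubalgebra ℂ (Dn n))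
    (hA : IsBalancedIn A (⊤ : LieSubalgebra ℂ (Dn n))) :
    intIdeal A ≠ ⊥ ∧ intIdeal A ≠ ⊤ := by
  obtain ⟨-, hideal, a, haA, ha0, h1, h2⟩ := hA
  have cancel : ∀ x : Dn n, x + x ∈ A → x ∈ A := by
    intro x hx
    have h := A.smul_mem ((2 : ℂ)⁻¹) hx
    rwa [← two_smul ℂ x, smul_smul, inv_mul_cancel₀ two_ne_zero, one_smul] at h
  have dagger : ∀ (f g : On n) (E : Dn n),
      ((g * a (a f)) • E + (g * E (a f)) • a : Dn n) ∈ A := by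
    intro f g E
    rw [key2]
    have hs : ⁅(a f) • a, g • E⁆ ∈ A := by
      rw [← key1 a f]
      exact h2 (f • a) trivial (g • E) trivial
    exact sub_mem (h1 (((a f) * g) • E) trivial) hs
  have one : ∀ f g : On n, ((g * a (a f)) • a : Dn n) ∈ A := by
    intro f g
    exact cancel _ (dagger f g a)
  have two : ∀ (f g : On n) (E : Dn n), ((g * (a (a f) * a (a f))) • E : Dn n) ∈ A := by
    intro f g E
    have d := dagger f (g * a (a f)) E
    have o := one f (g * E (a f))
    have e1 : (g * a (a f)) * a (a f) = g * (a (a f) * a (a f)) := by ring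
    have e2 : (g * a (a f)) * E (a f) = (g * E (a f)) * a (a f) := by ring
    rw [e1, e2] at d
    have e3 : (g * (a (a f) * a (a f))) • E + (g * E (a f) * a (a f)) • a
        - (g * E (a f) * a (a f)) • a = (g * (a (a f) * a (a f))) • E :=
      by
        ext x
        simp only [Derivation.sub_apply, Derivation.add_apply, Derivation.smul_apply,
          smul_eq_mul]
        ring
    have := sub_mem d o
    rwa [e3] at this
  have mem : ∀ f : On n, a (a f) * a (a f) ∈ intIdeal A := by
    intro f D
    have := two f 1 D
    rwa [one_mul] at this
  constructor
  · intro hbot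
    apply ha0
    have hz2 : ∀ f : On n, a (a f) = 0 := by
      intro f
      have h := mem f
      rw [hbot] at h
      exact On_sq_zero _ (Ideal.mem_bot.mp h)
    have hff : ∀ f : On n, a f * a f = 0 := by
      intro f
      have e : a (a (f * f)) = (a f * a f + a f * a f) + (f * a (a f) + f * a (a f)) := by
        simp only [Derivation.leibniz, map_add, smul_eq_mul]
        ring
      rw [hz2 (f * f), hz2 f, mul_zero, add_zero, add_zero] at e
      have e2 : a f * a f = (2 : ℂ)⁻¹ • (a f * a f + a f * a f) := by
        rw [← two_smul ℂ, smul_smul, inv_mul_cancel₀ two_ne_zero, one_smul]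
      rw [e2, ← e, smul_zero]
    refine DFunLike.ext _ _ fun f => ?_
    rw [Derivation.zero_apply]
    exact On_sq_zero _ (hff f)
  · intro htop
    have hall : ∀ D : Dn n, D ∈ A := by
      intro D
      have h1' : (1 : On n) ∈ intIdeal A := htop ▸ Submodule.mem_top
      have := h1' D
      rwa [one_smul] at this
    have hbot := hideal ⊤ (fun x _ => hall x)
    have hx : (⟨a, trivial⟩ : (⊤ : LieSubalgebra ℂ (Dn n))) ∈
        (⊤ : LieIdeal ℂ (⊤ : LieSubalgebra ℂ (Dn n))) := trivial
    rw [hbot] at hx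
    have := (LieSubmodule.mem_bot _).mp hx
    exact ha0 (by simpa using congrArg Subtype.val this)

end
end

section
/- Let A be a balanced Lie subalgebra of D = Der_ℂ(O_n). Then A is contained in the tangent algebra of its integral variety: A ⊆ D_{X(A)}, i.e. every D ∈ A satisfies D(√I(A)) ⊆ √I(A). -/
open Filter Topology

set_option synthInstance.maxHeartbeats 1000000
set_option maxHeartbeats 1000000

noncomputable section

section Aux
variable {R : Type*} [CommRing R] [Algebra ℂ R]

lemma aux_div_mem (I : Ideal R) {k : ℕ} (hk : k ≠ 0) {c : R}
    (h : (k : R) * c ∈ I) : c ∈ I := by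
  have : c = algebraMap ℂ R ((k : ℂ)⁻¹) * ((k : R) * c) := by
    rw [← mul_assoc, ← map_natCast (algebraMap ℂ R) k, ← map_mul,
      inv_mul_cancel₀ (Nat.cast_ne_zero.mpr hk), map_one, one_mul]
  rw [this]
  exact I.mul_mem_left _ h

lemma aux_deriv_radical (D : Derivation ℂ R R) (I : Ideal R)
    (hI : ∀ x ∈ I, D x ∈ I) {a : R} (ha : a ∈ I.radical) : D a ∈ I.radical := by
  obtain ⟨m, hm⟩ := Ideal.mem_radical_iff.mp ha
  rcases Nat.eq_zero_or_pos m with rfl | hm0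
  · exact Ideal.mem_radical_iff.mpr ⟨1, by
      have : (1 : R) ∈ I := by simpa using hm
      simpa using I.mul_mem_left (D a) this⟩
  · have key : ∀ k j : ℕ, j + k + 1 = m → a ^ j * (D a) ^ (2 * k + 1) ∈ I := by
      intro k
      induction k with
      | zero =>
        intro j hj
        have h1 : D (a ^ (j + 1)) ∈ I := hI _ (by rw [show j + 1 = m by omega]; exact hm)
        rw [Derivation.leibniz_pow, Nat.add_sub_cancel, smul_eq_mul, nsmul_eq_mul] at h1
        have := aux_div_mem I (Nat.succ_ne_zero j) h1
        simpa using this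
      | succ k ih =>
        intro j hj
        have hb : a ^ (j + 1) * (D a) ^ (2 * k + 1) ∈ I := ih (j + 1) (by omega)
        have hDb : D (a ^ (j + 1) * (D a) ^ (2 * k + 1)) ∈ I := hI _ hb
        have h2 : D a * D (a ^ (j + 1) * (D a) ^ (2 * k + 1))
            - ((2 * k + 1 : ℕ) : R) * (D (D a) * (a ^ (j + 1) * (D a) ^ (2 * k + 1))) ∈ I :=
          I.sub_mem (I.mul_mem_left _ hDb) (I.mul_mem_left _ (I.mul_mem_left _ hb))
        have heq : ((j + 1 : ℕ) : R) * (a ^ j * (D a) ^ (2 * (k + 1) + 1)) =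
            D a * D (a ^ (j + 1) * (D a) ^ (2 * k + 1))
            - ((2 * k + 1 : ℕ) : R) * (D (D a) * (a ^ (j + 1) * (D a) ^ (2 * k + 1))) := by
          rw [Derivation.leibniz, Derivation.leibniz_pow, Derivation.leibniz_pow,
            Nat.add_sub_cancel, Nat.add_sub_cancel]
          simp only [smul_eq_mul, nsmul_eq_mul]
          push_cast
          ring
        exact aux_div_mem I (Nat.succ_ne_zero j) (heq ▸ h2)
    exact Ideal.mem_radical_iff.mpr ⟨2 * (m - 1) + 1,
      by simpa using key (m - 1) 0 (by omega)⟩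

end Aux


lemma intIdeal_invariant {n : ℕ} (A : LieSubalgebra ℂ (Dn n))
    {D : Dn n} (hD : D ∈ A) {g : On n} (hg : g ∈ intIdeal A) :
    D g ∈ intIdeal A := by
  intro E
  have hid : (D g) • E = ⁅D, g • E⁆ - g • ⁅D, E⁆ := by
    ext f
    simp only [Derivation.sub_apply, Derivation.commutator_apply, Derivation.smul_apply,
      smul_eq_mul, Derivation.leibniz, map_mul]
    ring
  rw [hid]
  exact A.sub_mem (A.lie_mem hD (hg E)) (hg ⁅D, E⁆)

/-- A balanced Lie subalgebra `A` of `D` is contained in the tangent algebra of its integral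
variety: `A ⊆ D_{X(A)}`, i.e. every `D ∈ A` maps `√I(A)` into `√I(A)`. -/
theorem balanced_le_tangentAlgebra_of_integral_variety (n : ℕ)
    (A : LieSubalgebra ℂ (Dn n))
    (hA : IsBalancedIn A (⊤ : LieSubalgebra ℂ (Dn n))) :
    A ≤ tangentAlgebra n (intIdeal A).radical ∧
    ∀ D ∈ A, ∀ f ∈ (intIdeal A).radical, D f ∈ (intIdeal A).radical := by
  have main : ∀ D ∈ A, ∀ f ∈ (intIdeal A).radical, D f ∈ (intIdeal A).radical := by
    intro D hD f hf
    exact aux_deriv_radical D (intIdeal A) (fun x hx => intIdeal_invariant A hD hx) hf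
  exact ⟨fun D hD f hf => main D hD f hf, main⟩

end
end
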